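/- arXiv:2012.03092 — 3 statements merged into one kernel-verified Lean document; each statement's English description precedes it below -/
import Mathlib

section
/- Let a ∈ ℝⁿ be nonzero and let a_r be a vector keeping the r largest-in-magnitude entries of a and setting the rest to zero (1 ≤ r ≤ n). Then the unit vector a⁰ = a_r/‖a_r‖ satisfies ⟨a, a⁰⟩ ≥ √(r/n)·‖a‖. -/
open Finset

noncomputable def enorm2 {ι : Type*} [Fintype ι] (x : ι → ℝ) : ℝ :=
  Real.sqrt (∑ i, x i ^ 2)

def dot {ι : Type*} [Fintype ι] (x y : ι → ℝ) : ℝ := ∑ i, x i * y i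

noncomputable def l0 {ι : Type*} [Fintype ι] (x : ι → ℝ) : ℕ :=
  (Finset.univ.filter fun i => x i ≠ 0).card

def IsTrunc {ι : Type*} [Fintype ι] [DecidableEq ι] (a : ι → ℝ) (r : ℕ) (ar : ι → ℝ) : Prop :=
  ∃ S : Finset ι, S.card = r ∧ (∀ i ∈ S, ar i = a i) ∧ (∀ i ∉ S, ar i = 0) ∧
    ∀ i ∈ S, ∀ j ∉ S, |a j| ≤ |a i|

noncomputable def lmax {m n' : Type*} [Fintype m] [Fintype n'] (A : Matrix m n' ℝ) : ℝ :=
  sSup {c | ∃ x : n' → ℝ, enorm2 x = 1 ∧ c = enorm2 (A.mulVec x)}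

noncomputable def fnorm {m n' : Type*} [Fintype m] [Fintype n'] (A : Matrix m n' ℝ) : ℝ :=
  Real.sqrt (∑ i, ∑ j, A i j ^ 2)

def tri {n1 n2 n3 : ℕ} (A : Fin n1 → Fin n2 → Fin n3 → ℝ)
    (x : Fin n1 → ℝ) (y : Fin n2 → ℝ) (z : Fin n3 → ℝ) : ℝ :=
  ∑ i, ∑ j, ∑ k, A i j k * x i * y j * z k

def mlin {d : ℕ} {n : Fin d → ℕ} (A : (∀ j, Fin (n j)) → ℝ)
    (x : ∀ j, Fin (n j) → ℝ) : ℝ :=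
  ∑ i, A i * ∏ j, x j (i j)

/-- Proposition 3.1: the normalized truncation a⁰ = a_r/‖a_r‖ satisfies
⟨a, a⁰⟩ ≥ √(r/n)·‖a‖. -/
theorem stmt_0 {n : ℕ} (a : Fin n → ℝ) (r : ℕ) (hr1 : 1 ≤ r) (hrn : r ≤ n)
    (ha : a ≠ 0) (ar : Fin n → ℝ) (htr : IsTrunc a r ar) :
    dot a (fun i => ar i / enorm2 ar) ≥ Real.sqrt ((r : ℝ) / n) * enorm2 a := by
  obtain ⟨S, hcard, hin, hout, hmax⟩ := htr
  set sS := ∑ i ∈ S, a i ^ 2 with hsS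
  have hnpos : (0:ℝ) < n := by
    have : 1 ≤ n := le_trans hr1 hrn
    exact_mod_cast Nat.lt_of_lt_of_le Nat.zero_lt_one this
  -- sum of ar^2 equals sS
  have har2 : ∑ i, ar i ^ 2 = sS := by
    rw [← Finset.sum_subset (Finset.subset_univ S)
      (fun i _ hi => by rw [hout i hi]; ring)]
    exact Finset.sum_congr rfl fun i hi => by rw [hin i hi]
  have hdot : ∑ i, a i * ar i = sS := by
    rw [← Finset.sum_subset (Finset.subset_univ S)
      (fun i _ hi => by rw [hout i hi]; ring)]
    exact Finset.sum_congr rfl fun i hi => by rw [hin i hi]; ring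
  -- sS positive
  have hSpos : 0 < sS := by
    rcases lt_or_eq_of_le (Finset.sum_nonneg fun i _ => sq_nonneg (a i)) with h | h
    · exact h
    · exfalso; apply ha
      have hzero : ∀ i ∈ S, a i = 0 := by
        intro i hi
        have := (Finset.sum_eq_zero_iff_of_nonneg fun j _ => sq_nonneg (a j)).mp h.symm i hi
        exact pow_eq_zero_iff (two_ne_zero) |>.mp this
      have hne : S.Nonempty := Finset.card_pos.mp (by omega)
      obtain ⟨i0, hi0⟩ := hne
      funext j
      by_cases hj : j ∈ S
      · exact hzero j hj
      · have := hmax i0 hi0 j hj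
        rw [hzero i0 hi0, abs_zero] at this
        simpa using le_antisymm this (abs_nonneg _)
  -- key pointwise bound
  have key : ∀ j ∉ S, (r:ℝ) * a j ^ 2 ≤ sS := by
    intro j hj
    have : ∑ _i ∈ S, a j ^ 2 ≤ sS :=
      Finset.sum_le_sum fun i hi => by
        have := hmax i hi j hj
        calc a j ^ 2 = |a j| ^ 2 := (sq_abs _).symm
          _ ≤ |a i| ^ 2 := by gcongr
          _ = a i ^ 2 := sq_abs _
    simpa [hcard, mul_comm] using this
  -- main inequality : r * total ≤ n * sS
  have hmain : (r:ℝ) * (∑ i, a i ^ 2) ≤ (n:ℝ) * sS := by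
    have hsplit : ∑ i, a i ^ 2 = sS + ∑ i ∈ Sᶜ, a i ^ 2 := by
      rw [hsS, Finset.sum_add_sum_compl]
    have hc : (r:ℝ) * ∑ i ∈ Sᶜ, a i ^ 2 ≤ (Sᶜ.card : ℝ) * sS := by
      rw [Finset.mul_sum]
      calc ∑ i ∈ Sᶜ, (r:ℝ) * a i ^ 2 ≤ ∑ _i ∈ Sᶜ, sS :=
            Finset.sum_le_sum fun i hi => key i (Finset.mem_compl.mp hi)
        _ = (Sᶜ.card : ℝ) * sS := by rw [Finset.sum_const, nsmul_eq_mul]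
    have hcc : (Sᶜ.card : ℝ) = (n:ℝ) - r := by
      have : Sᶜ.card = n - r := by
        rw [Finset.card_compl, hcard]; simp
      rw [this]; push_cast [Nat.cast_sub hrn]; rfl
    rw [hsplit]
    have hrn' : (r:ℝ) ≤ n := by exact_mod_cast hrn
    nlinarith [hSpos, hc, hcc]
  -- compute the dot product
  have henorm : enorm2 ar = Real.sqrt sS := by rw [enorm2, har2]
  have hdotval : dot a (fun i => ar i / enorm2 ar) = Real.sqrt sS := by
    unfold dot
    simp only [henorm]
    rw [show ∑ i, a i * (ar i / Real.sqrt sS) = (∑ i, a i * ar i) / Real.sqrt sS by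
      rw [Finset.sum_div]; exact Finset.sum_congr rfl fun i _ => by ring]
    rw [hdot, Real.div_sqrt]
  rw [ge_iff_le, hdotval, enorm2, ← Real.sqrt_mul (by positivity)]
  apply Real.sqrt_le_sqrt
  rw [div_mul_eq_mul_div, div_le_iff₀ hnpos]
  linarith [hmain]
end

section
/- For a nonzero d-th order tensor 𝒜 ∈ ℝ^{n₁×⋯×n_d}, the output (x₁⁰,…,x_d⁰) of Algorithm A (fiber selection followed by sequential truncated updates) satisfies 𝒜(x₁⁰,…,x_d⁰) ≥ v_opt / √(∏_{j=1}^{d−1} r_j), where v_opt is the maximum of the multilinear form 𝒜(x₁,…,x_d) over unit vectors x_j with ‖x_j‖₀ ≤ r_j. -/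
set_option linter.unusedSectionVars false
set_option linter.unusedVariables false
set_option linter.deprecated false
set_option maxHeartbeats 1000000

open Finset

/-- Partial contraction of 𝒜 used in Algorithm A: coordinates k < j are fixed
at basis vectors e^{ī_k}, coordinate j is free, coordinates k > j are
contracted with x_k. -/
def gvec {d : ℕ} {n : Fin d → ℕ} (A : (∀ k, Fin (n k)) → ℝ)
    (ib : ∀ k, Fin (n k)) (x : ∀ k, Fin (n k) → ℝ) (j : Fin d) : Fin (n j) → ℝ :=
  fun t => ∑ i : ∀ k, Fin (n k), A i * ∏ k,
    (if k < j then (if i k = ib k then (1 : ℝ) else 0)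
     else if j < k then x k (i k)
     else (if (⟨k, i k⟩ : Σ m : Fin d, Fin (n m)) = ⟨j, t⟩ then 1 else 0))


section Aux
variable {ι : Type*} [Fintype ι] [DecidableEq ι]

lemma enorm_nonneg' (x : ι → ℝ) : 0 ≤ enorm2 x := Real.sqrt_nonneg _

lemma enorm_sq (x : ι → ℝ) : enorm2 x ^ 2 = ∑ i, x i ^ 2 :=
  Real.sq_sqrt (Finset.sum_nonneg fun i _ => sq_nonneg _)

lemma abs_le_enorm (x : ι → ℝ) (i : ι) : |x i| ≤ enorm2 x := by
  rw [enorm2, ← Real.sqrt_sq_eq_abs]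
  exact Real.sqrt_le_sqrt (Finset.single_le_sum (f := fun i => x i ^ 2)
    (fun i _ => sq_nonneg _) (mem_univ i))

lemma aux_sum_sq_le (a : ι → ℝ) (S U : Finset ι) (hcard : U.card ≤ S.card)
    (htop : ∀ i ∈ S, ∀ j ∉ S, |a j| ≤ |a i|) :
    ∑ i ∈ U, a i ^ 2 ≤ ∑ i ∈ S, a i ^ 2 := by
  have hU : ∑ i ∈ U, a i ^ 2 = ∑ i ∈ U ∩ S, a i ^ 2 + ∑ i ∈ U \ S, a i ^ 2 :=
    (Finset.sum_inter_add_sum_sdiff U S _).symm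
  have hS : ∑ i ∈ S, a i ^ 2 = ∑ i ∈ S ∩ U, a i ^ 2 + ∑ i ∈ S \ U, a i ^ 2 :=
    (Finset.sum_inter_add_sum_sdiff S U _).symm
  have hc : (U \ S).card ≤ (S \ U).card := by
    have h1 := Finset.card_sdiff_add_card_inter U S
    have h2 := Finset.card_sdiff_add_card_inter S U
    rw [Finset.inter_comm] at h2
    omega
  have hkey : ∑ i ∈ U \ S, a i ^ 2 ≤ ∑ i ∈ S \ U, a i ^ 2 := by
    by_cases hUS : (U \ S).Nonempty
    · have hSU : (S \ U).Nonempty := Finset.card_pos.mp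
        (lt_of_lt_of_le (Finset.card_pos.mpr hUS) hc)
      obtain ⟨i₀, hi₀, hmin⟩ := Finset.exists_min_image (S \ U) (fun i => a i ^ 2) hSU
      calc ∑ i ∈ U \ S, a i ^ 2 ≤ (U \ S).card • (a i₀ ^ 2) := by
            apply Finset.sum_le_card_nsmul
            intro j hj
            have hjS : j ∉ S := (Finset.mem_sdiff.mp hj).2
            have hi₀S : i₀ ∈ S := (Finset.mem_sdiff.mp hi₀).1
            have habs := htop i₀ hi₀S j hjS
            rw [← sq_abs (a j), ← sq_abs (a i₀)]
            exact pow_le_pow_left₀ (abs_nonneg _) habs 2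
        _ ≤ (S \ U).card • (a i₀ ^ 2) := nsmul_le_nsmul_left (sq_nonneg _) hc
        _ ≤ ∑ i ∈ S \ U, a i ^ 2 := Finset.card_nsmul_le_sum _ _ _ hmin
    · rw [Finset.not_nonempty_iff_eq_empty.mp hUS]
      simp [Finset.sum_nonneg fun i _ => sq_nonneg (a i)]
  rw [hU, hS, Finset.inter_comm]
  linarith

lemma enorm_trunc_eq {a ar : ι → ℝ} {S : Finset ι}
    (hagree : ∀ i ∈ S, ar i = a i) (hzero : ∀ i ∉ S, ar i = 0) :
    enorm2 ar = Real.sqrt (∑ i ∈ S, a i ^ 2) := by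
  rw [enorm2]
  congr 1
  rw [← Finset.sum_subset (Finset.subset_univ S) (fun i _ hi => by rw [hzero i hi]; ring)]
  exact Finset.sum_congr rfl fun i hi => by rw [hagree i hi]

lemma aux_trunc_dot_le {a ar y : ι → ℝ} {r : ℕ}
    (h : IsTrunc a r ar) (hy1 : enorm2 y = 1) (hy0 : l0 y ≤ r) :
    |dot a y| ≤ enorm2 ar := by
  obtain ⟨S, hScard, hagree, hzero, htop⟩ := h
  classical
  set U : Finset ι := Finset.univ.filter (fun i => y i ≠ 0) with hUdef
  have h1 : dot a y = ∑ i ∈ U, a i * y i := by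
    rw [dot]
    symm
    apply Finset.sum_subset (Finset.subset_univ U)
    intro i _ hi
    have : y i = 0 := by
      by_contra hy
      exact hi (Finset.mem_filter.mpr ⟨Finset.mem_univ i, hy⟩)
    simp [this]
  have hCS := sum_mul_sq_le_sq_mul_sq U a y
  have hsumy : ∑ i ∈ U, y i ^ 2 ≤ 1 := by
    have : ∑ i ∈ U, y i ^ 2 ≤ ∑ i, y i ^ 2 :=
      Finset.sum_le_sum_of_subset_of_nonneg (Finset.subset_univ U)
        (fun i _ _ => sq_nonneg _)
    have h2 : ∑ i, y i ^ 2 = 1 := by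
      have := enorm_sq y
      rw [hy1] at this; linarith
    linarith
  have hcard : U.card ≤ S.card := by
    rw [hScard]
    exact hy0
  have hsuma : ∑ i ∈ U, a i ^ 2 ≤ ∑ i ∈ S, a i ^ 2 :=
    aux_sum_sq_le a S U hcard htop
  have hnn : (0:ℝ) ≤ ∑ i ∈ S, a i ^ 2 := Finset.sum_nonneg fun i _ => sq_nonneg _
  have h3 : (∑ i ∈ U, a i * y i) ^ 2 ≤ ∑ i ∈ S, a i ^ 2 := by
    calc (∑ i ∈ U, a i * y i) ^ 2 ≤ (∑ i ∈ U, a i ^ 2) * (∑ i ∈ U, y i ^ 2) := hCS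
      _ ≤ (∑ i ∈ S, a i ^ 2) * 1 := by
          apply mul_le_mul hsuma hsumy (Finset.sum_nonneg fun i _ => sq_nonneg _) hnn
      _ = ∑ i ∈ S, a i ^ 2 := mul_one _
  rw [h1, enorm_trunc_eq hagree hzero]
  exact Real.abs_le_sqrt h3

lemma aux_trunc_abs_le {a ar : ι → ℝ} {r : ℕ}
    (h : IsTrunc a r ar) (hr : 1 ≤ r) (s : ι) : |a s| ≤ enorm2 ar := by
  obtain ⟨S, hScard, hagree, hzero, htop⟩ := h
  have hSne : S.Nonempty := Finset.card_pos.mp (by omega)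
  by_cases hs : s ∈ S
  · rw [← hagree s hs]
    exact abs_le_enorm ar s
  · obtain ⟨i₀, hi₀⟩ := hSne
    calc |a s| ≤ |a i₀| := htop i₀ hi₀ s hs
      _ = |ar i₀| := by rw [hagree i₀ hi₀]
      _ ≤ enorm2 ar := abs_le_enorm ar i₀

lemma aux_dot_norm {a ar : ι → ℝ} {r : ℕ} (h : IsTrunc a r ar) :
    dot a (fun s => ar s / enorm2 ar) = enorm2 ar := by
  obtain ⟨S, hScard, hagree, hzero, htop⟩ := h
  have hd : dot a ar = enorm2 ar ^ 2 := by
    rw [dot, enorm_sq]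
    apply Finset.sum_congr rfl
    intro i _
    by_cases hi : i ∈ S
    · rw [hagree i hi]; ring
    · rw [hzero i hi]; ring
  have h2 : dot a (fun s => ar s / enorm2 ar) = dot a ar / enorm2 ar := by
    rw [dot, dot, Finset.sum_div]
    exact Finset.sum_congr rfl fun i _ => by ring
  by_cases h0 : enorm2 ar = 0
  · rw [h2, h0, div_zero]
  · rw [h2, hd, pow_two, mul_div_assoc, div_self h0, mul_one]

lemma aux_l1 (y : ι → ℝ) : ∑ i, |y i| ≤ Real.sqrt (l0 y) * enorm2 y := by
  classical
  set U : Finset ι := Finset.univ.filter (fun i => y i ≠ 0) with hUdef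
  have h1 : ∑ i, |y i| = ∑ i ∈ U, |y i| := by
    symm
    apply Finset.sum_subset (Finset.subset_univ U)
    intro i _ hi
    have : y i = 0 := by
      by_contra hy
      exact hi (Finset.mem_filter.mpr ⟨Finset.mem_univ i, hy⟩)
    simp [this]
  rw [h1, l0, enorm2]
  calc ∑ i ∈ U, |y i| = ∑ i ∈ U, 1 * |y i| := by simp
    _ ≤ Real.sqrt (∑ i ∈ U, (1:ℝ) ^ 2) * Real.sqrt (∑ i ∈ U, |y i| ^ 2) :=
        Real.sum_mul_le_sqrt_mul_sqrt U 1 (fun i => |y i|)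
    _ ≤ Real.sqrt U.card * Real.sqrt (∑ i, y i ^ 2) := by
        apply mul_le_mul
        · simp
        · apply Real.sqrt_le_sqrt
          simp only [sq_abs]
          exact Finset.sum_le_sum_of_subset_of_nonneg (Finset.subset_univ U)
            (fun i _ _ => sq_nonneg _)
        · exact Real.sqrt_nonneg _
        · exact Real.sqrt_nonneg _

lemma aux_sqrt_prod {κ : Type*} (s : Finset κ) (f : κ → ℝ) (hf : ∀ i, 0 ≤ f i) :
    Real.sqrt (∏ i ∈ s, f i) = ∏ i ∈ s, Real.sqrt (f i) := by
  induction s using Finset.cons_induction with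
  | empty => simp
  | cons a s ha ih =>
    rw [Finset.prod_cons, Finset.prod_cons, Real.sqrt_mul (hf a), ih]

end Aux

lemma claim1 {d : ℕ} {n : Fin d → ℕ} (A : (∀ k, Fin (n k)) → ℝ)
    (ib : ∀ k, Fin (n k)) (x : ∀ k, Fin (n k) → ℝ) (j : Fin d) :
    dot (gvec A ib x j) (x j) =
      ∑ i, A i * ∏ k, (if k.val < j.val then (if i k = ib k then (1:ℝ) else 0)
        else x k (i k)) := by
  unfold dot gvec
  simp only [Finset.sum_mul]
  rw [Finset.sum_comm]
  apply Finset.sum_congr rfl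
  intro i _
  have key : ∀ t : Fin (n j),
      (∏ k, (if k < j then (if i k = ib k then (1:ℝ) else 0)
        else if j < k then x k (i k)
        else (if (⟨k, i k⟩ : Σ m : Fin d, Fin (n m)) = ⟨j, t⟩ then 1 else 0)))
      = (∏ k ∈ Finset.univ.erase j,
          (if k.val < j.val then (if i k = ib k then (1:ℝ) else 0) else x k (i k)))
        * (if i j = t then 1 else 0) := by
    intro t
    rw [← Finset.prod_erase_mul _ _ (Finset.mem_univ j)]
    congr 1
    · apply Finset.prod_congr rfl
      intro k hk
      have hkj : k ≠ j := (Finset.mem_erase.mp hk).1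
      rcases lt_or_gt_of_ne hkj with h | h
      · have h' : k.val < j.val := h
        simp [h, h']
      · have h' : ¬ (k.val < j.val) := by
          have : (j:ℕ) < (k:ℕ) := h
          omega
        simp [not_lt_of_gt h, h, h']
    · simp [lt_irrefl, Sigma.mk.inj_iff]
  simp only [key]
  have hR : (∏ k : Fin d, (if k.val < j.val then (if i k = ib k then (1:ℝ) else 0)
      else x k (i k)))
      = (∏ k ∈ Finset.univ.erase j,
          (if k.val < j.val then (if i k = ib k then (1:ℝ) else 0) else x k (i k)))
        * x j (i j) := by
    rw [← Finset.prod_erase_mul _ _ (Finset.mem_univ j)]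
    congr 1
    simp
  rw [hR]
  simp only [mul_ite, ite_mul, mul_one, mul_zero, zero_mul]
  rw [Finset.sum_ite_eq Finset.univ (i j)
    (fun t => A i * (∏ k ∈ Finset.univ.erase j,
      (if k.val < j.val then (if i k = ib k then (1:ℝ) else 0) else x k (i k))) * x j t)]
  simp [mul_assoc]

lemma claim2 {d : ℕ} {n : Fin d → ℕ} (A : (∀ k, Fin (n k)) → ℝ)
    (ib : ∀ k, Fin (n k)) (x : ∀ k, Fin (n k) → ℝ) (j : Fin d) :
    gvec A ib x j (ib j) =
      ∑ i, A i * ∏ k, (if k.val < j.val + 1 then (if i k = ib k then (1:ℝ) else 0)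
        else x k (i k)) := by
  unfold gvec
  apply Finset.sum_congr rfl
  intro i _
  congr 1
  apply Finset.prod_congr rfl
  intro k _
  rcases lt_trichotomy k j with h | h | h
  · have h' : k.val < j.val + 1 := by
      have : k.val < j.val := h
      omega
    simp [h, h']
  · subst h
    simp [lt_irrefl, Sigma.mk.inj_iff]
  · have h' : ¬ (k.val < j.val + 1) := by
      have : (j:ℕ) < (k:ℕ) := h
      omega
    simp [not_lt_of_gt h, h, h']

lemma gvec_last_eq {d : ℕ} {n : Fin d → ℕ} (A : (∀ k, Fin (n k)) → ℝ)
    (ib : ∀ k, Fin (n k)) (x : ∀ k, Fin (n k) → ℝ) (last : Fin d)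
    (hlast : (last : ℕ) = d - 1) (s : Fin (n last)) :
    gvec A ib x last s = A (Function.update ib last s) := by
  classical
  unfold gvec
  have hnotgt : ∀ k : Fin d, ¬ last < k := by
    intro k hk
    have h1 : (last:ℕ) < (k:ℕ) := hk
    have h2 : (k:ℕ) < d := k.isLt
    omega
  have hprod : ∀ i : ∀ k, Fin (n k),
      (∏ k, (if k < last then (if i k = ib k then (1:ℝ) else 0)
        else if last < k then x k (i k)
        else (if (⟨k, i k⟩ : Σ m : Fin d, Fin (n m)) = ⟨last, s⟩ then 1 else 0)))
      = if i = Function.update ib last s then 1 else 0 := by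
    intro i
    by_cases heq : i = Function.update ib last s
    · subst heq
      rw [if_pos rfl]
      apply Finset.prod_eq_one
      intro k _
      rcases lt_trichotomy k last with h | h | h
      · have hk : k ≠ last := ne_of_lt h
        simp [h, Function.update_of_ne hk]
      · subst h
        simp [lt_irrefl]
      · exact absurd h (hnotgt k)
    · rw [if_neg heq]
      obtain ⟨k₀, hk₀⟩ := Function.ne_iff.mp heq
      apply Finset.prod_eq_zero (Finset.mem_univ k₀)
      rcases lt_trichotomy k₀ last with h | h | h
      · have hk : k₀ ≠ last := ne_of_lt h
        rw [Function.update_of_ne hk] at hk₀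
        simp [h, hk₀]
      · subst h
        rw [Function.update_self] at hk₀
        simp [lt_irrefl, Sigma.mk.inj_iff, hk₀]
      · exact absurd h (hnotgt k₀)
  simp only [hprod, mul_ite, mul_one, mul_zero]
  rw [Finset.sum_ite_eq' Finset.univ (Function.update ib last s) A]
  simp


/-- Theorem 3.1' (general order): the output of Algorithm A satisfies
𝒜(x₁⁰,…,x_d⁰) ≥ v_opt/√(∏_{j=1}^{d-1} r_j). -/
theorem stmt_9 {d : ℕ} {n : Fin d → ℕ} (hd : 3 ≤ d)
    (A : (∀ k, Fin (n k)) → ℝ) (hA : A ≠ 0)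
    (r : Fin d → ℕ) (hr : ∀ j, 1 ≤ r j ∧ r j ≤ n j)
    (last : Fin d) (hlast : (last : ℕ) = d - 1)
    (x : ∀ j, Fin (n j) → ℝ) (t : ∀ j, Fin (n j) → ℝ)
    -- step 1-2: truncations of all mode-d fibers; select the fiber of
    -- largest truncated norm
    (T : (∀ k, Fin (n k)) → Fin (n last) → ℝ)
    (hT : ∀ i, IsTrunc (gvec A i x last) (r last) (T i))
    (ib : ∀ k, Fin (n k)) (hsel : ∀ i, enorm2 (T i) ≤ enorm2 (T ib))
    (htlast : t last = T ib)
    (hxlast : x last = fun s => t last s / enorm2 (t last))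
    -- step 3: sequential truncated updates for j = d-1 down to 1
    (hstep : ∀ j, j ≠ last → IsTrunc (gvec A ib x j) (r j) (t j) ∧
      x j = fun s => t j s / enorm2 (t j)) :
    ∀ y : ∀ j, Fin (n j) → ℝ, (∀ j, enorm2 (y j) = 1 ∧ l0 (y j) ≤ r j) →
      mlin A y ≤ Real.sqrt (∏ j ∈ Finset.univ.erase last, (r j : ℝ)) * mlin A x := by
  classical
  intro y hy
  -- basic facts about the algorithm output
  have trunc : ∀ j, IsTrunc (gvec A ib x j) (r j) (t j) := by
    intro j
    by_cases h : j = last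
    · subst h; rw [htlast]; exact hT ib
    · exact (hstep j h).1
  have xdef : ∀ j, x j = fun s => t j s / enorm2 (t j) := by
    intro j
    by_cases h : j = last
    · subst h; exact hxlast
    · exact (hstep j h).2
  set F : ℕ → ℝ := fun m => ∑ i, A i * ∏ k : Fin d,
    (if k.val < m then (if i k = ib k then (1:ℝ) else 0) else x k (i k)) with hF
  have hFj : ∀ j : Fin d, F (j : ℕ) = enorm2 (t j) := by
    intro j
    have h1 := claim1 A ib x j
    rw [xdef j] at h1
    exact h1.symm.trans (aux_dot_norm (trunc j))
  have hmono : ∀ m, m < d → F (m + 1) ≤ F m := by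
    intro m hm
    set j : Fin d := ⟨m, hm⟩ with hj
    have h2 := claim2 A ib x j
    calc F (m + 1) = gvec A ib x j (ib j) := h2.symm
      _ ≤ |gvec A ib x j (ib j)| := le_abs_self _
      _ ≤ enorm2 (t j) := aux_trunc_abs_le (trunc j) (hr j).1 _
      _ = F m := (hFj j).symm
  have hchain : ∀ k, k ≤ d - 1 → F (d - 1) ≤ F (d - 1 - k) := by
    intro k
    induction k with
    | zero => intro _; simp
    | succ k ih =>
      intro hk
      have h1 : d - 1 - (k + 1) < d := by omega
      have h2 := hmono (d - 1 - (k + 1)) h1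
      have h3 : d - 1 - (k + 1) + 1 = d - 1 - k := by omega
      rw [h3] at h2
      exact le_trans (ih (by omega)) h2
  have hF0 : F 0 = mlin A x := by
    rw [hF, mlin]
    simp
  have hFlast : F (d - 1) = enorm2 (T ib) := by
    have h1 := hFj last
    rw [hlast] at h1
    rw [h1, htlast]
  have hlow : enorm2 (T ib) ≤ mlin A x := by
    have h1 := hchain (d - 1) le_rfl
    simp only [Nat.sub_self] at h1
    rw [hFlast, hF0] at h1
    exact h1
  -- upper bound for the feasible point y
  set e := Equiv.piSplitAt last (fun k => Fin (n k)) with he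
  have hyl := hy last
  have hfib : ∀ i : ∀ k, Fin (n k), |dot (gvec A i x last) (y last)| ≤ enorm2 (T ib) :=
    fun i => le_trans (aux_trunc_dot_le (hT i) hyl.1 hyl.2) (hsel i)
  set s0 : Fin (n last) := ⟨0, by have h1 := (hr last).1; have h2 := (hr last).2; omega⟩
    with hs0
  have hprodsplit : ∀ (s : Fin (n last)) (p : ∀ k : {k : Fin d // k ≠ last}, Fin (n k.1)),
      (∏ k, y k ((e.symm (s, p)) k)) =
        (∏ k : {k : Fin d // k ≠ last}, y k.1 (p k)) * y last s := by
    intro s p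
    rw [← Finset.prod_erase_mul _ _ (Finset.mem_univ last)]
    congr 1
    · rw [Finset.prod_subtype (Finset.univ.erase last)
        (p := fun k => k ≠ last) (fun k => by simp)
        (fun k => y k ((e.symm (s, p)) k))]
      apply Finset.prod_congr rfl
      intro k _
      congr 1
      simp [he, Equiv.piSplitAt_symm_apply, k.2]
    · congr 1
      simp [he, Equiv.piSplitAt_symm_apply]
  have h1 : mlin A y = ∑ p : (∀ k : {k : Fin d // k ≠ last}, Fin (n k.1)),
      (∏ k : {k : Fin d // k ≠ last}, y k.1 (p k)) *
        dot (gvec A (e.symm (s0, p)) x last) (y last) := by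
    rw [mlin, ← Equiv.sum_comp e.symm (fun i => A i * ∏ k, y k (i k))]
    rw [Fintype.sum_prod_type]
    rw [Finset.sum_comm]
    apply Finset.sum_congr rfl
    intro p _
    rw [dot, Finset.mul_sum]
    apply Finset.sum_congr rfl
    intro s _
    rw [hprodsplit s p]
    have hA' : A (e.symm (s, p)) = gvec A (e.symm (s0, p)) x last s := by
      rw [gvec_last_eq A _ x last hlast s]
      congr 1
      funext k
      by_cases hk : k = last
      · subst hk
        simp [he, Equiv.piSplitAt_symm_apply]
      · rw [Function.update_of_ne hk]
        simp [he, Equiv.piSplitAt_symm_apply, hk]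
    rw [hA']
    ring
  have hTnn : (0:ℝ) ≤ enorm2 (T ib) := enorm_nonneg' _
  have hup : mlin A y ≤
      (∏ k : {k : Fin d // k ≠ last}, Real.sqrt (r k.1)) * enorm2 (T ib) := by
    rw [h1]
    calc ∑ p : (∀ k : {k : Fin d // k ≠ last}, Fin (n k.1)),
          (∏ k : {k : Fin d // k ≠ last}, y k.1 (p k)) *
            dot (gvec A (e.symm (s0, p)) x last) (y last)
        ≤ ∑ p : (∀ k : {k : Fin d // k ≠ last}, Fin (n k.1)),
          (∏ k : {k : Fin d // k ≠ last}, |y k.1 (p k)|) * enorm2 (T ib) := by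
          apply Finset.sum_le_sum
          intro p _
          calc (∏ k : {k : Fin d // k ≠ last}, y k.1 (p k)) *
                dot (gvec A (e.symm (s0, p)) x last) (y last)
              ≤ |(∏ k : {k : Fin d // k ≠ last}, y k.1 (p k)) *
                dot (gvec A (e.symm (s0, p)) x last) (y last)| := le_abs_self _
            _ = |∏ k : {k : Fin d // k ≠ last}, y k.1 (p k)| *
                |dot (gvec A (e.symm (s0, p)) x last) (y last)| := abs_mul _ _
            _ ≤ |∏ k : {k : Fin d // k ≠ last}, y k.1 (p k)| * enorm2 (T ib) :=
                mul_le_mul_of_nonneg_left (hfib _) (abs_nonneg _)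
            _ = (∏ k : {k : Fin d // k ≠ last}, |y k.1 (p k)|) * enorm2 (T ib) := by
                rw [Finset.abs_prod]
      _ = (∏ k : {k : Fin d // k ≠ last}, ∑ s, |y k.1 s|) * enorm2 (T ib) := by
          rw [← Finset.sum_mul]
          congr 1
          rw [Finset.prod_univ_sum]
          rw [Fintype.piFinset_univ]
      _ ≤ (∏ k : {k : Fin d // k ≠ last}, Real.sqrt (r k.1)) * enorm2 (T ib) := by
          apply mul_le_mul_of_nonneg_right _ hTnn
          apply Finset.prod_le_prod
            (fun k _ => Finset.sum_nonneg fun s _ => abs_nonneg _)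
          intro k _
          calc ∑ s, |y k.1 s| ≤ Real.sqrt (l0 (y k.1)) * enorm2 (y k.1) := aux_l1 _
            _ = Real.sqrt (l0 (y k.1)) := by rw [(hy k.1).1, mul_one]
            _ ≤ Real.sqrt (r k.1) := Real.sqrt_le_sqrt (by exact_mod_cast (hy k.1).2)
  have hsqrt : Real.sqrt (∏ j ∈ Finset.univ.erase last, (r j : ℝ)) =
      ∏ k : {k : Fin d // k ≠ last}, Real.sqrt (r k.1) := by
    rw [aux_sqrt_prod _ _ (fun j => by positivity)]
    rw [Finset.prod_subtype (Finset.univ.erase last)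
      (p := fun k => k ≠ last) (fun k => by simp)
      (fun j => Real.sqrt (r j))]
  have hprodnn : (0:ℝ) ≤ ∏ k : {k : Fin d // k ≠ last}, Real.sqrt (r k.1) :=
    Finset.prod_nonneg fun k _ => Real.sqrt_nonneg _
  calc mlin A y ≤ (∏ k : {k : Fin d // k ≠ last}, Real.sqrt (r k.1)) * enorm2 (T ib) := hup
    _ ≤ (∏ k : {k : Fin d // k ≠ last}, Real.sqrt (r k.1)) * mlin A x :=
        mul_le_mul_of_nonneg_left hlow hprodnn
    _ = Real.sqrt (∏ j ∈ Finset.univ.erase last, (r j : ℝ)) * mlin A x := by rw [hsqrt]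
end

section
/- Let A ∈ ℝ^{m×n} be nonzero, let A^k̃ be the row of A of largest Euclidean norm, let w = (A^k̃)ᵀ/‖A^k̃‖, x = Aw, and x⁰ = x_r/‖x_r‖ where x_r is the r-truncation of x (1 ≤ r ≤ m, assuming x_r ≠ 0). Then ‖Aᵀx⁰‖ ≥ √(r/m²)·‖A‖_F. -/
open Finset

/-- Lemma 3.3: SVD-free estimate. With A^k̃ the largest-norm row,
w = (A^k̃)ᵀ/‖A^k̃‖, x = Aw and x⁰ the normalized r-truncation of x,
one has ‖Aᵀx⁰‖ ≥ √(r/m²)·‖A‖_F. -/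
theorem stmt_15 {m n : ℕ} (A : Matrix (Fin m) (Fin n) ℝ) (hA : A ≠ 0)
    (kt : Fin m) (hkt : ∀ k, enorm2 (A k) ≤ enorm2 (A kt))
    (w : Fin n → ℝ) (hw : w = fun j => A kt j / enorm2 (A kt))
    (x : Fin m → ℝ) (hx : x = A.mulVec w)
    (r : ℕ) (hr1 : 1 ≤ r) (hrm : r ≤ m)
    (xr : Fin m → ℝ) (htr : IsTrunc x r xr) (hxr : xr ≠ 0)
    (x0 : Fin m → ℝ) (hx0 : x0 = fun i => xr i / enorm2 xr) :
    enorm2 (A.transpose.mulVec x0) ≥ Real.sqrt ((r : ℝ) / (m : ℝ) ^ 2) * fnorm A := by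
  have hm : 0 < m := kt.pos
  have hmR : (0:ℝ) < m := by exact_mod_cast hm
  obtain ⟨S, hScard, hS1, hS2, hS3⟩ := htr
  have hex : ∃ i j, A i j ≠ 0 := by
    by_contra h; push_neg at h
    exact hA (by ext i j; exact h i j)
  obtain ⟨i0, j0, hij0⟩ := hex
  have hrow : 0 < ∑ j, A i0 j ^ 2 := by
    have h1 : 0 < A i0 j0 ^ 2 := by positivity
    exact lt_of_lt_of_le h1
      (Finset.single_le_sum (f := fun j => A i0 j ^ 2) (fun j _ => sq_nonneg _) (mem_univ _))
  have hc0 : 0 < enorm2 (A kt) := lt_of_lt_of_le (Real.sqrt_pos.mpr hrow) (hkt i0)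
  set c := enorm2 (A kt) with hcdef
  have hc2 : c ^ 2 = ∑ j, A kt j ^ 2 := Real.sq_sqrt (by positivity)
  have hW : ∑ j, w j ^ 2 = 1 := by
    simp only [hw, div_pow, ← Finset.sum_div, ← hc2]
    field_simp
  have hxkt : x kt = c := by
    simp only [hx, Matrix.mulVec, dotProduct, hw]
    have h : ∀ j, A kt j * (A kt j / c) = A kt j ^ 2 / c := fun j => by ring
    simp_rw [h, ← Finset.sum_div, ← hc2]
    field_simp
  set Sx := ∑ i, x i ^ 2 with hSx
  set Q := ∑ i, xr i ^ 2 with hQ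
  set F := ∑ i, ∑ j, A i j ^ 2 with hF
  have hQS : Q = ∑ i ∈ S, x i ^ 2 := by
    rw [hQ, ← Finset.sum_add_sum_compl S fun i => xr i ^ 2]
    have e1 : ∑ i ∈ S, xr i ^ 2 = ∑ i ∈ S, x i ^ 2 :=
      Finset.sum_congr rfl fun i hi => by rw [hS1 i hi]
    have e2 : ∑ i ∈ Sᶜ, xr i ^ 2 = 0 :=
      Finset.sum_eq_zero fun i hi => by rw [hS2 i (Finset.mem_compl.mp hi)]; ring
    rw [e1, e2, add_zero]
  have hQpos : 0 < Q := by
    obtain ⟨i1, hi1⟩ := Function.ne_iff.mp hxr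
    have h1 : 0 < xr i1 ^ 2 := by
      rw [← sq_abs]; exact pow_pos (abs_pos.mpr hi1) 2
    exact lt_of_lt_of_le h1
      (Finset.single_le_sum (f := fun i => xr i ^ 2) (fun i _ => sq_nonneg _) (mem_univ _))
  have hFnn : 0 ≤ F := by positivity
  have hSxnn : 0 ≤ Sx := by positivity
  have hSxc : c ^ 2 ≤ Sx := by
    rw [← hxkt]
    exact Finset.single_le_sum (f := fun i => x i ^ 2) (fun i _ => sq_nonneg _) (mem_univ _)
  have hFc : F ≤ m * c ^ 2 := by
    rw [hF]
    calc ∑ i, ∑ j, A i j ^ 2 ≤ ∑ _i : Fin m, c ^ 2 := by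
          refine Finset.sum_le_sum fun i _ => ?_
          have h1 : enorm2 (A i) ^ 2 ≤ c ^ 2 :=
            pow_le_pow_left₀ (Real.sqrt_nonneg _) (hkt i) 2
          simp only [enorm2] at h1
          rwa [Real.sq_sqrt (by positivity : (0:ℝ) ≤ ∑ j, A i j ^ 2)] at h1
      _ = m * c ^ 2 := by simp [mul_comm]
  have hTrunc : (r : ℝ) * Sx ≤ m * Q := by
    have hcompl : (Sᶜ : Finset (Fin m)).card = m - r := by
      rw [Finset.card_compl, hScard, Fintype.card_fin]
    have hsq : ∀ i ∈ S, ∀ j ∈ Sᶜ, x j ^ 2 ≤ x i ^ 2 := by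
      intro i hi j hj
      have h := hS3 i hi j (Finset.mem_compl.mp hj)
      calc x j ^ 2 = |x j| ^ 2 := (sq_abs _).symm
        _ ≤ |x i| ^ 2 := pow_le_pow_left₀ (abs_nonneg _) h 2
        _ = x i ^ 2 := sq_abs _
    have h1 : ∑ i ∈ S, ∑ j ∈ Sᶜ, x j ^ 2 ≤ ∑ i ∈ S, ∑ _j ∈ Sᶜ, x i ^ 2 :=
      Finset.sum_le_sum fun i hi => Finset.sum_le_sum fun j hj => hsq i hi j hj
    have h2 : ∑ _i ∈ S, ∑ j ∈ Sᶜ, x j ^ 2 = (r : ℝ) * ∑ j ∈ Sᶜ, x j ^ 2 := by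
      rw [Finset.sum_const, hScard, nsmul_eq_mul]
    have h3 : ∑ i ∈ S, ∑ _j ∈ Sᶜ, x i ^ 2 = ((m - r : ℕ) : ℝ) * ∑ i ∈ S, x i ^ 2 := by
      simp_rw [Finset.sum_const, hcompl, nsmul_eq_mul]
      rw [← Finset.mul_sum]
    have hcast : ((m - r : ℕ) : ℝ) = (m : ℝ) - r := by
      rw [Nat.cast_sub hrm]
    have hsplit : Sx = ∑ i ∈ S, x i ^ 2 + ∑ j ∈ Sᶜ, x j ^ 2 :=
      (Finset.sum_add_sum_compl S _).symm
    rw [h2, h3, hcast] at h1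
    rw [hsplit, hQS]
    linarith [h1]
  -- enorm xr = √Q and x0 = xr/√Q
  have henxr : enorm2 xr = Real.sqrt Q := rfl
  -- ⟨Aᵀx0, w⟩ = √Q
  set y := A.transpose.mulVec x0 with hy
  have hdot : ∑ j, y j * w j = Real.sqrt Q := by
    have h1 : ∑ j, y j * w j = ∑ i, x0 i * x i := by
      simp only [hy, hx, Matrix.mulVec, dotProduct, Matrix.transpose_apply]
      simp_rw [Finset.sum_mul, Finset.mul_sum]
      rw [Finset.sum_comm]
      apply Finset.sum_congr rfl; intro i _
      apply Finset.sum_congr rfl; intro j _; ring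
    have h2 : ∑ i, xr i * x i = Q := by
      rw [← Finset.sum_add_sum_compl S fun i => xr i * x i, hQS]
      have e1 : ∑ i ∈ S, xr i * x i = ∑ i ∈ S, x i ^ 2 :=
        Finset.sum_congr rfl fun i hi => by rw [hS1 i hi]; ring
      have e2 : ∑ i ∈ Sᶜ, xr i * x i = 0 :=
        Finset.sum_eq_zero fun i hi => by rw [hS2 i (Finset.mem_compl.mp hi)]; ring
      rw [e1, e2, add_zero]
    rw [h1]
    simp only [hx0, henxr]
    simp_rw [div_mul_eq_mul_div, ← Finset.sum_div, h2]
    rw [div_eq_iff (ne_of_gt (Real.sqrt_pos.mpr hQpos))]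
    exact (Real.mul_self_sqrt hQpos.le).symm
  -- Cauchy–Schwarz: √Q ≤ enorm y
  have hcs : Real.sqrt Q ≤ enorm2 y := by
    have h1 : (∑ j, y j * w j) ^ 2 ≤ (∑ j, y j ^ 2) * ∑ j, w j ^ 2 :=
      Finset.sum_mul_sq_le_sq_mul_sq _ _ _
    rw [hdot, hW, mul_one, Real.sq_sqrt hQpos.le] at h1
    calc Real.sqrt Q ≤ Real.sqrt (∑ j, y j ^ 2) := Real.sqrt_le_sqrt h1
      _ = enorm2 y := rfl
  -- combine
  have hkey : (r : ℝ) / (m : ℝ) ^ 2 * F ≤ Q := by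
    rw [div_mul_eq_mul_div, div_le_iff₀ (by positivity)]
    have hr0 : (0:ℝ) ≤ r := Nat.cast_nonneg r
    nlinarith [mul_le_mul_of_nonneg_left hFc hr0,
      mul_le_mul_of_nonneg_left hSxc (mul_nonneg hmR.le hr0),
      mul_le_mul_of_nonneg_left hTrunc hmR.le]
  have hfn : fnorm A = Real.sqrt F := rfl
  calc Real.sqrt ((r : ℝ) / (m : ℝ) ^ 2) * fnorm A
      = Real.sqrt ((r : ℝ) / (m : ℝ) ^ 2 * F) := by
        rw [hfn, ← Real.sqrt_mul (by positivity)]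
    _ ≤ Real.sqrt Q := Real.sqrt_le_sqrt hkey
    _ ≤ enorm2 y := hcs
end
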